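/- Let f(n, k) denote the number of words in [k]^n avoiding the generalized pattern 11-2. Then for every integer k ≥ 0, the identity (∑_{n ≥ 0} f(n, k)·x^n) · ∏_{j=0}^{k-1} (1 - j·x - x²) = ∏_{j=0}^{k-1} (1 - (j - 1)·x) holds as an identity of formal power series over ℚ. -/

import Mathlib

open PowerSeries

/-- The `i`-th letter (1-based value in `{1,…,k}`) of a word `w ∈ [k]^n`,
with value `0` outside the word. -/
def letter {n k : ℕ} (w : Fin n → Fin k) (i : ℕ) : ℕ :=
  if h : i < n then (w ⟨i, h⟩ : ℕ) + 1 else 0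

/-- `w` avoids the generalized pattern 11-2: there are no 0-based indices
`i, j` with `i + 2 ≤ j < n` such that `w i = w (i+1)` and `w j > w i`. -/
def Avoids11d2 {n k : ℕ} (w : Fin n → Fin k) : Prop :=
  ∀ i j : ℕ, i + 2 ≤ j → j < n →
    ¬ (letter w i = letter w (i + 1) ∧ letter w i < letter w j)

/-- The number of words in `[k]^n` avoiding 11-2. -/
noncomputable def f (n k : ℕ) : ℕ := Nat.card {w : Fin n → Fin k // Avoids11d2 w}

lemma letter_of_lt {n k : ℕ} (w : Fin n → Fin k) {i : ℕ} (h : i < n) :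
    letter w i = (w ⟨i, h⟩ : ℕ) + 1 := dif_pos h

lemma letter_cons_succ {m k : ℕ} (b : Fin k) (v : Fin m → Fin k) (i : ℕ) :
    letter (Fin.cons b v : Fin (m+1) → Fin k) (i+1) = letter v i := by
  unfold letter
  by_cases h : i < m
  · rw [dif_pos (by omega : i + 1 < m + 1), dif_pos h]
    have : (⟨i+1, by omega⟩ : Fin (m+1)) = Fin.succ ⟨i, h⟩ := rfl
    rw [this, Fin.cons_succ]
  · rw [dif_neg (by omega), dif_neg h]

lemma letter_cons_zero {m k : ℕ} (b : Fin k) (v : Fin m → Fin k) :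
    letter (Fin.cons b v : Fin (m+1) → Fin k) 0 = (b : ℕ) + 1 := by
  rw [letter_of_lt _ (by omega : 0 < m+1)]
  have : (⟨0, by omega⟩ : Fin (m+1)) = 0 := rfl
  rw [this, Fin.cons_zero]

lemma cons_avoids {m k : ℕ} (b : Fin k) (v : Fin m → Fin k) :
    Avoids11d2 (Fin.cons b v : Fin (m+1) → Fin k) ↔
      Avoids11d2 v ∧ ∀ j : Fin m, v ⟨0, j.pos⟩ = b → v j ≤ b := by
  constructor
  · intro H
    refine ⟨?_, ?_⟩
    · intro i j hij hj
      have := H (i+1) (j+1) (by omega) (by omega)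
      rw [letter_cons_succ, letter_cons_succ, letter_cons_succ] at this
      exact this
    · intro j hb
      by_cases hj : (j : ℕ) = 0
      · have : j = ⟨0, j.pos⟩ := Fin.ext hj
        rw [this, hb]
      · have := H 0 ((j : ℕ) + 1) (by omega) (by omega)
        rw [letter_cons_zero, show (0:ℕ)+1 = 0+1 from rfl, letter_cons_succ,
          letter_cons_succ, letter_of_lt v j.pos, letter_of_lt v j.isLt] at this
        rw [Fin.eta] at this
        rw [hb] at this
        rw [Fin.le_def]
        omega
  · rintro ⟨hv, hflat⟩ i j hij hj ⟨h1, h2⟩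
    obtain ⟨j', rfl⟩ : ∃ j', j = j' + 1 := ⟨j - 1, by omega⟩
    match i with
    | 0 =>
      rw [letter_cons_zero, show (0:ℕ)+1 = 0+1 from rfl, letter_cons_succ] at h1
      rw [letter_cons_zero, letter_cons_succ] at h2
      have hj'm : j' < m := by omega
      rw [letter_of_lt v hj'm] at h2
      have h0m : (0:ℕ) < m := by omega
      rw [letter_of_lt v h0m] at h1
      have hb : v ⟨0, h0m⟩ = b := Fin.ext (by omega)
      have := hflat ⟨j', hj'm⟩ (by convert hb)
      rw [Fin.le_def] at this
      omega
    | i' + 1 =>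
      rw [letter_cons_succ, show i'+1+1 = (i'+1)+1 from rfl, letter_cons_succ] at h1
      rw [letter_cons_succ, letter_cons_succ] at h2
      exact hv i' j' (by omega) (by omega) ⟨h1, h2⟩

/-- All letters are at most the first one. -/
def Flat {n k : ℕ} (v : Fin (n+1) → Fin k) : Prop := ∀ j, v j ≤ v 0

lemma cons_avoids' {n k : ℕ} (b : Fin k) (v : Fin (n+1) → Fin k) :
    Avoids11d2 (Fin.cons b v : Fin (n+2) → Fin k) ↔
      Avoids11d2 v ∧ (v 0 = b → Flat v) := by
  rw [cons_avoids]
  unfold Flat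
  have h0 : ∀ j : Fin (n+1), (⟨0, j.pos⟩ : Fin (n+1)) = 0 := fun j => rfl
  constructor
  · rintro ⟨h1, h2⟩
    refine ⟨h1, ?_⟩
    intro hb j
    have := h2 j hb
    rw [← hb] at this
    exact this
  · rintro ⟨h1, h2⟩
    refine ⟨h1, ?_⟩
    intro j hb
    have hb' : v 0 = b := hb
    have := h2 hb' j
    rw [hb'] at this
    exact this

lemma avoids_of_val_eq {m k k' : ℕ} {v : Fin m → Fin k} {u : Fin m → Fin k'}
    (h : ∀ i, (v i : ℕ) = u i) : Avoids11d2 v ↔ Avoids11d2 u := by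
  have hl : ∀ i, letter v i = letter u i := by
    intro i
    unfold letter
    split
    · rw [h]
    · rfl
  unfold Avoids11d2
  simp only [hl]

open Classical in
noncomputable def mainEquiv (n k : ℕ) :
    ({w : Fin (n+2) → Fin k // Avoids11d2 w} ⊕ {v : Fin (n+1) → Fin k // Avoids11d2 v}) ≃
      ((Fin k × {v : Fin (n+1) → Fin k // Avoids11d2 v}) ⊕
        {v : Fin (n+1) → Fin k // Avoids11d2 v ∧ Flat v}) where
  toFun := Sum.elim
    (fun w => .inl (w.1 0, ⟨Fin.tail w.1,
      ((cons_avoids' (w.1 0) (Fin.tail w.1)).mp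
        (by rw [Fin.cons_self_tail]; exact w.2)).1⟩))
    (fun v => if h : Flat v.1 then .inr ⟨v.1, v.2, h⟩ else .inl (v.1 0, v))
  invFun := Sum.elim
    (fun p => if h : p.2.1 0 = p.1 → Flat p.2.1 then
        .inl ⟨Fin.cons p.1 p.2.1, (cons_avoids' p.1 p.2.1).mpr ⟨p.2.2, h⟩⟩
      else .inr p.2)
    (fun v => .inr ⟨v.1, v.2.1⟩)
  left_inv x := by
    rcases x with ⟨w, hw⟩ | ⟨v, hv⟩
    · simp only [Sum.elim_inl]
      rw [dif_pos ((cons_avoids' (w 0) (Fin.tail w)).mp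
        (by rw [Fin.cons_self_tail]; exact hw)).2]
      simp [Fin.cons_self_tail]
    · by_cases h : Flat v
      · simp only [Sum.elim_inr, dif_pos h, Sum.elim_inr]
      · simp only [Sum.elim_inr, dif_neg h, Sum.elim_inl]
        rw [dif_neg (by simpa using h)]
  right_inv x := by
    rcases x with ⟨b, v, hv⟩ | ⟨v, hv, hf⟩
    · by_cases h : v 0 = b → Flat v
      · simp only [Sum.elim_inl, dif_pos h, Sum.elim_inl]
        simp [Fin.tail_cons, Fin.cons_zero]
      · simp only [Sum.elim_inl, dif_neg h, Sum.elim_inr]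
        push_neg at h
        rw [dif_neg h.2]
        simp [h.1]
    · simp only [Sum.elim_inr, Sum.elim_inr, dif_pos hf]

noncomputable def flatEquiv (n k : ℕ) :
    {v : Fin (n+1) → Fin k // Avoids11d2 v ∧ Flat v} ≃
      Σ a : Fin k, {u : Fin n → Fin ((a : ℕ)+1) // Avoids11d2 u} where
  toFun v :=
    ⟨v.1 0, fun j => ⟨(v.1 j.succ : ℕ), by
        have := v.2.2 j.succ; rw [Fin.le_def] at this; omega⟩,
      by
        refine (avoids_of_val_eq (v := Fin.tail v.1) (fun i => rfl)).mp ?_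
        exact ((cons_avoids (v.1 0) (Fin.tail v.1)).mp
          (by rw [Fin.cons_self_tail]; exact v.2.1)).1⟩
  invFun p :=
    ⟨Fin.cons p.1 (fun j => Fin.castLE p.1.isLt (p.2.1 j)),
      by
        rw [cons_avoids]
        constructor
        · exact (avoids_of_val_eq (u := p.2.1) (fun i => rfl)).mpr p.2.2
        · intro j _
          rw [Fin.le_def]
          have := (p.2.1 j).isLt
          simpa using by omega,
      by
        intro j
        refine Fin.cases ?_ ?_ j
        · exact le_refl _
        · intro i
          rw [Fin.cons_succ, Fin.cons_zero, Fin.le_def]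
          have := (p.2.1 i).isLt
          simpa using by omega⟩
  left_inv v := by
    apply Subtype.ext
    dsimp only
    funext j
    refine Fin.cases ?_ ?_ j
    · rw [Fin.cons_zero]
    · intro i
      rw [Fin.cons_succ]
      exact Fin.ext rfl
  right_inv p := by
    refine Sigma.ext rfl (heq_of_eq (Subtype.ext (funext fun i => Fin.ext ?_)))
    dsimp only
    simp [Fin.cons_succ]

lemma f_zero (k : ℕ) : f 0 k = 1 := by
  have h : ∀ w : Fin 0 → Fin k, Avoids11d2 w := by
    intro w i j hij hj
    omega
  rw [f, Nat.card_congr (Equiv.subtypeUnivEquiv h)]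
  exact Nat.card_unique

lemma f_one (k : ℕ) : f 1 k = k := by
  have h : ∀ w : Fin 1 → Fin k, Avoids11d2 w := by
    intro w i j hij hj
    omega
  rw [f, Nat.card_congr ((Equiv.subtypeUnivEquiv h).trans (Equiv.funUnique (Fin 1) (Fin k)))]
  simp

lemma f_alpha_zero (n : ℕ) : f (n+1) 0 = 0 := by
  haveI : IsEmpty (Fin (n+1) → Fin 0) := ⟨fun w => (w 0).elim0⟩
  rw [f]
  exact Nat.card_of_isEmpty

lemma f_rec (n k : ℕ) :
    f (n+2) k + f (n+1) k = k * f (n+1) k + ∑ a ∈ Finset.range k, f n (a+1) := by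
  classical
  have h1 : f (n+2) k + f (n+1) k =
      Nat.card (({w : Fin (n+2) → Fin k // Avoids11d2 w}) ⊕
        ({v : Fin (n+1) → Fin k // Avoids11d2 v})) := by
    rw [Nat.card_sum, f, f]
  rw [h1, Nat.card_congr (mainEquiv n k), Nat.card_sum, Nat.card_prod,
    Nat.card_congr (flatEquiv n k)]
  congr 1
  · rw [Nat.card_eq_fintype_card (α := Fin k), Fintype.card_fin, f]
  · letI : ∀ a : Fin k, Fintype {u : Fin n → Fin ((a : ℕ)+1) // Avoids11d2 u} :=
      fun a => Fintype.ofFinite _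
    rw [Nat.card_eq_fintype_card, Fintype.card_sigma, ← Fin.sum_univ_eq_sum_range]
    refine Finset.sum_congr rfl fun a _ => ?_
    rw [f, Nat.card_eq_fintype_card]

lemma f_recQ (n k : ℕ) :
    (f (n+2) k : ℚ) = ((k : ℚ) - 1) * f (n+1) k + ∑ a ∈ Finset.range k, (f n (a+1) : ℚ) := by
  have h := f_rec n k
  have h2 : ((f (n+2) k : ℕ) : ℚ) + f (n+1) k =
      (k : ℚ) * f (n+1) k + ∑ a ∈ Finset.range k, (f n (a+1) : ℚ) := by
    exact_mod_cast congrArg (fun m : ℕ => (m : ℚ)) h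
  linarith

lemma coeff_mul_lin (F : ℚ⟦X⟧) (a : ℚ) (n : ℕ) :
    (coeff n) (F * (1 - C a * X - X ^ 2)) =
      coeff n F - a * (if 1 ≤ n then coeff (n - 1) F else 0)
        - (if 2 ≤ n then coeff (n - 2) F else 0) := by
  have e : F * (1 - C a * X - X ^ 2) = F - C a * (F * X ^ 1) - F * X ^ 2 := by ring
  rw [e, map_sub, map_sub, coeff_C_mul, coeff_mul_X_pow', coeff_mul_X_pow']

lemma coeff_mul_lin' (F : ℚ⟦X⟧) (a : ℚ) (n : ℕ) :
    (coeff n) (F * (1 - C a * X)) =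
      coeff n F - a * (if 1 ≤ n then coeff (n - 1) F else 0) := by
  have e : F * (1 - C a * X) = F - C a * (F * X ^ 1) := by ring
  rw [e, map_sub, coeff_C_mul, coeff_mul_X_pow']

lemma step (k : ℕ) :
    (PowerSeries.mk fun n => (f n (k+1) : ℚ)) * (1 - C (k : ℚ) * X - X ^ 2) =
      (PowerSeries.mk fun n => (f n k : ℚ)) * (1 - C ((k : ℚ) - 1) * X) := by
  ext n
  rw [coeff_mul_lin, coeff_mul_lin']
  simp only [coeff_mk]
  match n with
  | 0 => norm_num [f_zero]
  | 1 => norm_num [f_zero, f_one]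
  | n + 2 =>
    simp only [if_pos (by omega : 1 ≤ n + 2), if_pos (by omega : 2 ≤ n + 2),
      Nat.add_sub_cancel]
    have e1 : n + 2 - 1 = n + 1 := by omega
    rw [e1]
    rw [f_recQ n (k+1), f_recQ n k, Finset.sum_range_succ]
    push_cast
    ring

theorem stmt6 (k : ℕ) :
    (PowerSeries.mk fun n => (f n k : ℚ)) *
        ∏ j ∈ Finset.range k, (1 - C (j : ℚ) * X - X ^ 2) =
      ∏ j ∈ Finset.range k, (1 - C ((j : ℚ) - 1) * X) := by
  induction k with
  | zero =>
      simp only [Finset.range_zero, Finset.prod_empty, mul_one]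
      ext n
      match n with
      | 0 => simp [f_zero]
      | n + 1 => simp [f_alpha_zero, coeff_one]
  | succ k ih =>
      rw [Finset.prod_range_succ, Finset.prod_range_succ]
      linear_combination (∏ j ∈ Finset.range k, (1 - C (j : ℚ) * X - X ^ 2)) * step k +
        (1 - C ((k : ℚ) - 1) * X) * ih
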